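/- Let S ∈ ℝ^{n×m} be a selection matrix, E = [I_n; Sᵀ] ∈ ℝ^{(n+m)×n}, and D = I_n + diag(S·1_m) (which is invertible). Then for every weight matrix W ∈ ℝ^{p×n} and every input x ∈ ℝⁿ, (W D⁻¹ Eᵀ)(E x) = W x. That is, Net2Net width expansion is function preserving: if the input to a layer is expanded by duplicating coordinates according to E, and the incoming weights of each original unit are divided by its multiplicity (via D⁻¹) before copying columns (via Eᵀ), then the layer's output is unchanged. -/
import Mathlib


open Matrix

/-- Net2Net width expansion is function preserving: `(W D⁻¹ Eᵀ) (E x) = W x`. -/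
theorem stmt_6 (n m p : ℕ) (S : Matrix (Fin n) (Fin m) ℝ)
    (hS : ∃ σ : Fin m → Fin n, ∀ i k, S i k = if i = σ k then 1 else 0)
    (E : Matrix (Fin n ⊕ Fin m) (Fin n) ℝ) (hE : E = Matrix.fromRows 1 Sᵀ)
    (Dm : Matrix (Fin n) (Fin n) ℝ)
    (hDm : Dm = 1 + Matrix.diagonal (fun i => ∑ k : Fin m, S i k)) :
    ∀ (W : Matrix (Fin p) (Fin n) ℝ) (x : Fin n → ℝ),
      (W * Dm⁻¹ * Eᵀ).mulVec (E.mulVec x) = W.mulVec x := by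
  obtain ⟨σ, hσ⟩ := hS
  -- S * Sᵀ is diagonal
  have hSS : S * Sᵀ = Matrix.diagonal (fun i => ∑ k : Fin m, S i k) := by
    ext i j
    simp only [Matrix.mul_apply, Matrix.transpose_apply, Matrix.diagonal_apply]
    by_cases hij : i = j
    · subst hij
      simp only [if_pos rfl]
      apply Finset.sum_congr rfl
      intro k _
      rw [hσ]
      by_cases h : i = σ k <;> simp [h]
    · simp [hij]
      apply Finset.sum_eq_zero
      intro k _
      simp [hσ]
      intro hi hj
      simp_all
  have hEE : Eᵀ * E = Dm := by
    rw [hE, hDm]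
    rw [Matrix.transpose_fromRows, Matrix.fromCols_mul_fromRows]
    simp [hSS]
  -- Dm is invertible: diagonal with positive entries
  have hDmd : Dm = Matrix.diagonal (fun i => 1 + ∑ k : Fin m, S i k) := by
    rw [hDm]
    rw [← Matrix.diagonal_one, ← Matrix.diagonal_add]
  have hpos : ∀ i, (1 + ∑ k : Fin m, S i k) ≠ 0 := by
    intro i
    have h0 : (0:ℝ) ≤ ∑ k : Fin m, S i k := by
      apply Finset.sum_nonneg
      intro k _
      rw [hσ]
      positivity
    positivity
  have hinv : IsUnit Dm.det := by
    rw [hDmd, Matrix.det_diagonal]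
    exact (Finset.prod_ne_zero_iff.mpr fun i _ => hpos i).isUnit
  intro W x
  rw [Matrix.mulVec_mulVec, Matrix.mul_assoc, Matrix.mul_assoc, hEE,
    Matrix.nonsing_inv_mul Dm hinv, Matrix.mul_one]
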